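/- arXiv:1801.06916 — 2 statements merged into one kernel-verified Lean document; each statement's English description precedes it below -/
import Mathlib

section
/- For every r ≥ 1 and every n ≥ q^{r−1} − 1, the multi-poly-Bernoulli-Carlitz number with index s = (1, …, 1) (r ones) and j = (0, …, 0) satisfies BC_n^{(1,…,1),(0,…,0)} = Σ {n brace q^{i_1} − 1}_C · BC_{q^{i_1} − 1} · (BC_{q^{i_2} − 1}/Π(q^{i_2} − 1)) ⋯ (BC_{q^{i_r} − 1}/Π(q^{i_r} − 1)), where the sum runs over all integer tuples i_1 > i_2 > ⋯ > i_r ≥ 0 with q^{i_1} − 1 ≤ n. -/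
open Polynomial PowerSeries

noncomputable section

namespace Carlitz

variable (F : Type) [Field F] [Fintype F]

/-- `q`, the cardinality of the finite field of constants `𝔽_q`. -/
def q : ℕ := Fintype.card F

/-- The Carlitz polynomial `D_i = ∏_{j=0}^{i-1} (θ^{q^i} - θ^{q^j})` (with `D_0 = 1`). -/
def Dpoly (i : ℕ) : Polynomial F :=
  ∏ j ∈ Finset.range i, (Polynomial.X ^ (q F) ^ i - Polynomial.X ^ (q F) ^ j)

/-- The Carlitz polynomial `L_i = ∏_{j=1}^{i} (θ - θ^{q^j})` (with `L_0 = 1`). -/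
def Lpoly (i : ℕ) : Polynomial F :=
  ∏ j ∈ Finset.range i, (Polynomial.X - Polynomial.X ^ (q F) ^ (j + 1))

/-- The Carlitz factorial `Π(n) = ∏_i D_i^{n_i}` where `n = Σ_i n_i q^i` is the base-`q`
expansion of `n`.  This also equals the Carlitz gamma `Γ_{n+1}`. -/
def cfact (n : ℕ) : Polynomial F :=
  ∏ i ∈ Finset.range (Nat.digits (q F) n).length,
    (Dpoly F i) ^ ((Nat.digits (q F) n).getD i 0)

/-- The inclusion `A = 𝔽_q[θ] → k = 𝔽_q(θ)`. -/
def toK : Polynomial F →+* RatFunc F := algebraMap _ _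

/-- The Carlitz exponential `e_C(z) = Σ_{i≥0} z^{q^i}/D_i` as a power series over `k`. -/
def eC : PowerSeries (RatFunc F) :=
  PowerSeries.mk fun n => ∑ i ∈ Finset.range (n + 1),
    if (q F) ^ i = n then (toK F (Dpoly F i))⁻¹ else 0

/-- The Bernoulli-Carlitz numbers `BC_n`, defined by `Σ_n BC_n z^n/Π(n) = z/e_C(z)`:
since `e_C(z) = z · u(z)` where `u(z) = Σ_m (coeff_{m+1} e_C) z^m` has constant term `1`,
we have `z/e_C(z) = u(z)⁻¹` and `BC_n = Π(n) · coeff_n (u⁻¹)`. -/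
def BCnum (n : ℕ) : RatFunc F :=
  toK F (cfact F n) *
    PowerSeries.coeff n
      (PowerSeries.mk fun m => PowerSeries.coeff (m + 1) (eC F))⁻¹

/-- The Stirling-Carlitz numbers of the second kind `{n brace m}_C`, defined by
`Σ_n {n brace m}_C z^n/Π(n) = e_C(z)^m/Π(m)`, i.e. `{n brace m}_C = Π(n)·coeff_n(e_C^m)/Π(m)`. -/
def StC (n m : ℕ) : RatFunc F :=
  toK F (cfact F n) * PowerSeries.coeff n (eC F ^ m) * (toK F (cfact F m))⁻¹

/-- The (finite) set of strictly decreasing tuples `i : Fin r → ℕ`,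
`i_1 > i_2 > ⋯ > i_r ≥ 0`, with all values `< N`. -/
def decTuples (r N : ℕ) : Finset (Fin r → ℕ) :=
  (Finset.univ.filter fun i : Fin r → Fin N => ∀ a b : Fin r, a < b → i b < i a).image
    fun i l => (i l : ℕ)

/-- The leading (largest) entry `i_1` of a (strictly decreasing) tuple. -/
def lead {r : ℕ} (i : Fin r → ℕ) : ℕ := if h : 0 < r then i ⟨0, h⟩ else 0

/-- The multi-poly-Bernoulli-Carlitz numbers `BC_n^{s,j}`, defined by the generating series
`Σ_n BC_n^{s,j} z^n/Π(n) = Li_s(e_C(z)·u_{1 j_1}, u_{2 j_2}, …, u_{r j_r})/e_C(z)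
 = Σ_{i_1 > ⋯ > i_r ≥ 0} e_C(z)^{q^{i_1}-1} ∏_l u_{l j_l}^{q^{i_l}}/L_{i_l}^{s_l}`,
written out coefficientwise (here `u l` is the datum `u_{l j_l} ∈ A`; the coefficient of
`z^n` in `e_C^{q^{i_1}-1}` vanishes whenever `i_1 > n`, so the sum below is complete). -/
def MPBC {r : ℕ} (s : Fin r → ℕ) (u : Fin r → Polynomial F) (n : ℕ) : RatFunc F :=
  toK F (cfact F n) * ∑ i ∈ decTuples r (n + 1),
    PowerSeries.coeff n (eC F ^ ((q F) ^ lead i - 1)) *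
      ∏ l, (toK F (u l)) ^ ((q F) ^ (i l)) * ((toK F (Lpoly F (i l))) ^ (s l))⁻¹

/-- The two-variable rational function field `K₂ = 𝔽_q(θ)(t)`. -/
abbrev K2 := RatFunc (RatFunc F)

/-- The inclusion `k = 𝔽_q(θ) → 𝔽_q(θ)(t)`. -/
def liftK : RatFunc F →+* K2 F :=
  (algebraMap (Polynomial (RatFunc F)) (K2 F)).comp Polynomial.C

/-- The inclusion `A = 𝔽_q[θ] → 𝔽_q(θ)(t)`. -/
def liftA : Polynomial F →+* K2 F := (liftK F).comp (toK F)

/-- The inclusion of constants `𝔽_q → 𝔽_q(θ)(t)`. -/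
def liftF : F →+* K2 F := (liftA F).comp Polynomial.C

/-- Substitution `θ ↦ t` on a polynomial `P ∈ 𝔽_q[θ]`, landing in `𝔽_q(θ)(t)`
(where `t` is the outer variable `RatFunc.X`); e.g. `D_i|_{θ=t}`. -/
def subT (P : Polynomial F) : K2 F :=
  Polynomial.eval (RatFunc.X : K2 F) (P.map (liftF F))

/-- Evaluation of a polynomial in `A[t]` in `𝔽_q(θ)(t)` (coefficients included via
`A → 𝔽_q(θ)`, the variable `t` sent to the outer `RatFunc.X`). -/
def evalAT (h : Polynomial (Polynomial F)) : K2 F :=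
  Polynomial.eval (RatFunc.X : K2 F) (h.map (liftA F))

/-- The power series `1 - Σ_{i≥0} (∏_{j=1}^{i}(t^{q^i} - θ^{q^j})/D_i|_{θ=t}) x^{q^i}`
appearing in the definition of the Anderson-Thakur polynomials. -/
def ATgen : PowerSeries (K2 F) :=
  1 - PowerSeries.mk fun m => ∑ i ∈ Finset.range (m + 1),
    if (q F) ^ i = m then
      (∏ j ∈ Finset.range i,
        ((RatFunc.X : K2 F) ^ (q F) ^ i - (liftK F RatFunc.X) ^ (q F) ^ (j + 1))) *
        (subT F (Dpoly F i))⁻¹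
    else 0

/-- `H : ℕ → A[t]` is the family of Anderson-Thakur polynomials iff
`{1 - Σ_i (∏_{j=1}^{i}(t^{q^i} - θ^{q^j})/D_i|_{θ=t}) x^{q^i}}⁻¹ = Σ_n (H_n/Γ_{n+1}|_{θ=t}) x^n`,
i.e. the product of the left-hand factor with the right-hand series equals `1`. -/
def IsATFamily (H : ℕ → Polynomial (Polynomial F)) : Prop :=
  ATgen F * (PowerSeries.mk fun n => evalAT F (H n) * (subT F (cfact F n))⁻¹) = 1

/-- Reduction of a rational function `x ∈ k` whose denominator is coprime to `℘`
into `A/℘A`: reduce numerator and denominator (in lowest terms) and divide. -/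
def redmod (℘ : Polynomial F) (x : RatFunc F) : Polynomial F ⧸ Ideal.span {℘} :=
  Ideal.Quotient.mk (Ideal.span {℘}) x.num *
    Ring.inverse (Ideal.Quotient.mk (Ideal.span {℘}) x.denom)

/-- The finite multiple zeta value `ζ_{𝒜_k}(s)_℘ ∈ A/℘A`: the sum of
`1/(a_1^{s_1} ⋯ a_r^{s_r})` over monic `a_1, …, a_r ∈ A` with
`deg ℘ > deg a_1 > ⋯ > deg a_r ≥ 0`. -/
def finMZV (℘ : Polynomial F) {r : ℕ} (s : Fin r → ℕ) : Polynomial F ⧸ Ideal.span {℘} :=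
  ∑ᶠ a ∈ {a : Fin r → Polynomial F |
      (∀ l, (a l).Monic) ∧ (StrictAnti fun l => (a l).natDegree) ∧
        ∀ l, (a l).natDegree < ℘.natDegree},
    ∏ l, Ring.inverse (Ideal.Quotient.mk (Ideal.span {℘}) (a l) ^ (s l))

/-- The finite Carlitz multiple polylogarithm
`Li_{𝒜_k,s}(u_1, …, u_r)_℘ = Σ_{deg ℘ > i_1 > ⋯ > i_r ≥ 0} u_1^{q^{i_1}} ⋯ u_r^{q^{i_r}}
/ (L_{i_1}^{s_1} ⋯ L_{i_r}^{s_r}) ∈ A/℘A`. -/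
def finCMPL (℘ : Polynomial F) {r : ℕ} (s : Fin r → ℕ) (u : Fin r → Polynomial F) :
    Polynomial F ⧸ Ideal.span {℘} :=
  ∑ i ∈ decTuples r ℘.natDegree,
    ∏ l, Ideal.Quotient.mk (Ideal.span {℘}) (u l) ^ ((q F) ^ (i l)) *
      Ring.inverse (Ideal.Quotient.mk (Ideal.span {℘}) (Lpoly F (i l)) ^ (s l))

/-! ### Auxiliary development for the proof of `MPBC_ones` -/

section Aux

lemma two_le_q : 2 ≤ q F := Fintype.one_lt_card

lemma one_lt_q : 1 < q F := two_le_q F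

lemma q_pos : 0 < q F := by have := two_le_q F; omega

lemma exists_charData : ∃ p e : ℕ, p.Prime ∧ 0 < e ∧ q F = p ^ e ∧ CharP F p := by
  obtain ⟨p, hc⟩ := CharP.exists F
  haveI := hc
  obtain ⟨n, hp, hcard⟩ := FiniteField.card F p
  exact ⟨p, n, hp, n.2, hcard, hc⟩

lemma gen_sub_pow {R : Type} [CommRing R] {p : ℕ} (hp : p.Prime) [CharP R p]
    {Q : ℕ} (hQ : ∃ e, Q = p ^ e) (x y : R) (i : ℕ) :
    (x - y) ^ Q ^ i = x ^ Q ^ i - y ^ Q ^ i := by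
  obtain ⟨e, rfl⟩ := hQ
  haveI := Fact.mk hp
  have h : (p ^ e) ^ i = p ^ (e * i) := (pow_mul p e i).symm
  rw [h]
  exact sub_pow_char_pow x y (e * i)

lemma gen_neg_pow {R : Type} [CommRing R] {p : ℕ} (hp : p.Prime) [CharP R p]
    {Q : ℕ} (hQ : ∃ e, Q = p ^ e) (x : R) (i : ℕ) :
    (-x) ^ Q ^ i = -(x ^ Q ^ i) := by
  have hne : Q ^ i ≠ 0 := by
    obtain ⟨e, rfl⟩ := hQ
    exact pow_ne_zero _ (pow_ne_zero _ hp.pos.ne')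
  have h := gen_sub_pow hp hQ (0 : R) x i
  rwa [zero_sub, zero_pow hne, zero_sub] at h

lemma gen_sum_pow {R : Type} [CommRing R] {p : ℕ} (hp : p.Prime) [CharP R p]
    {Q : ℕ} (hQ : ∃ e, Q = p ^ e) {ι : Type} (s : Finset ι) (f : ι → R) :
    (∑ j ∈ s, f j) ^ Q = ∑ j ∈ s, f j ^ Q := by
  obtain ⟨e, rfl⟩ := hQ
  haveI := Fact.mk hp
  haveI : ExpChar R p := ExpChar.prime hp
  exact sum_pow_char_pow (p := p) (n := e) s f

lemma exists_charData' : ∃ p : ℕ, p.Prime ∧ (∃ e, q F = p ^ e) ∧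
    CharP (Polynomial F) p ∧ CharP (RatFunc F) p ∧ CharP (PowerSeries (RatFunc F)) p := by
  obtain ⟨p, e, hp, _, hq, hc⟩ := exists_charData F
  haveI := hc
  have h1 : CharP (Polynomial F) p :=
    charP_of_injective_ringHom (Polynomial.C_injective (R := F)) p
  have h2 : CharP (RatFunc F) p := by
    refine charP_of_injective_ringHom (f := (toK F).comp Polynomial.C) ?_ p
    exact (RatFunc.algebraMap_injective F).comp Polynomial.C_injective
  haveI := h2
  have h3 : CharP (PowerSeries (RatFunc F)) p := by
    refine charP_of_injective_ringHom (f := (PowerSeries.C)) ?_ p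
    intro a b hab
    simpa using congrArg (PowerSeries.constantCoeff) hab
  exact ⟨p, hp, ⟨e, hq⟩, h1, h2, h3⟩

lemma polyF_sub_pow_q (x y : Polynomial F) : (x - y) ^ q F = x ^ q F - y ^ q F := by
  obtain ⟨p, hp, hq, h1, h2, h3⟩ := exists_charData' F
  haveI := h1
  have := gen_sub_pow hp hq x y 1
  simpa [pow_one] using this

lemma ratF_sub_pow_qpow (x y : RatFunc F) (i : ℕ) :
    (x - y) ^ (q F) ^ i = x ^ (q F) ^ i - y ^ (q F) ^ i := by
  obtain ⟨p, hp, hq, h1, h2, h3⟩ := exists_charData' F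
  haveI := h2
  exact gen_sub_pow hp hq x y i

lemma ratF_neg_pow_qpow (x : RatFunc F) (i : ℕ) :
    (-x) ^ (q F) ^ i = -(x ^ (q F) ^ i) := by
  obtain ⟨p, hp, hq, h1, h2, h3⟩ := exists_charData' F
  haveI := h2
  exact gen_neg_pow hp hq x i

lemma ratF_sum_pow_q {ι : Type} (s : Finset ι) (f : ι → RatFunc F) :
    (∑ j ∈ s, f j) ^ q F = ∑ j ∈ s, f j ^ q F := by
  obtain ⟨p, hp, hq, h1, h2, h3⟩ := exists_charData' F
  haveI := h2
  exact gen_sum_pow hp hq s f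

lemma psF_sum_pow_q {ι : Type} (s : Finset ι) (f : ι → PowerSeries (RatFunc F)) :
    (∑ j ∈ s, f j) ^ q F = ∑ j ∈ s, f j ^ q F := by
  obtain ⟨p, hp, hq, h1, h2, h3⟩ := exists_charData' F
  haveI := h3
  exact gen_sum_pow hp hq s f

/-! ### Polynomial-level facts -/

lemma Dpoly_zero : Dpoly F 0 = 1 := Finset.prod_range_zero _

lemma Lpoly_zero : Lpoly F 0 = 1 := Finset.prod_range_zero _

lemma Lpoly_succ (j : ℕ) :
    Lpoly F (j + 1) = Lpoly F j * (Polynomial.X - Polynomial.X ^ (q F) ^ (j + 1)) :=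
  Finset.prod_range_succ _ _

lemma Dpoly_succ (i : ℕ) :
    Dpoly F (i + 1) = (Polynomial.X ^ (q F) ^ (i + 1) - Polynomial.X) * Dpoly F i ^ q F := by
  unfold Dpoly
  rw [Finset.prod_range_succ']
  rw [pow_zero, pow_one, mul_comm]
  congr 1
  rw [← Finset.prod_pow]
  apply Finset.prod_congr rfl
  intro j _
  rw [polyF_sub_pow_q]
  congr 1 <;> rw [← pow_mul, ← pow_succ]

lemma X_pow_sub_X_pow_ne_zero {a b : ℕ} (h : b < a) :
    (Polynomial.X : Polynomial F) ^ a - Polynomial.X ^ b ≠ 0 := by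
  intro heq
  have h2 : (Polynomial.X : Polynomial F) ^ a = Polynomial.X ^ b := sub_eq_zero.mp heq
  have h3 := congrArg Polynomial.natDegree h2
  rw [Polynomial.natDegree_X_pow, Polynomial.natDegree_X_pow] at h3
  omega

lemma Dpoly_ne_zero (i : ℕ) : Dpoly F i ≠ 0 := by
  unfold Dpoly
  rw [Finset.prod_ne_zero_iff]
  intro j hj
  exact X_pow_sub_X_pow_ne_zero F
    (Nat.pow_lt_pow_right (one_lt_q F) (Finset.mem_range.mp hj))

lemma Lpoly_ne_zero (i : ℕ) : Lpoly F i ≠ 0 := by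
  unfold Lpoly
  rw [Finset.prod_ne_zero_iff]
  intro j hj
  have h1 : 1 < (q F) ^ (j + 1) := Nat.one_lt_pow (Nat.succ_ne_zero j) (one_lt_q F)
  have := X_pow_sub_X_pow_ne_zero F (a := (q F) ^ (j + 1)) (b := 1) h1
  rw [pow_one] at this
  intro heq
  apply this
  rw [← neg_sub] at heq
  rw [neg_eq_zero] at heq
  exact heq

lemma cfact_ne_zero (n : ℕ) : cfact F n ≠ 0 := by
  unfold cfact
  rw [Finset.prod_ne_zero_iff]
  intro i _
  exact pow_ne_zero _ (Dpoly_ne_zero F i)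

lemma toK_injective : Function.Injective (toK F) := RatFunc.algebraMap_injective F

lemma toK_ne_zero {P : Polynomial F} (h : P ≠ 0) : toK F P ≠ 0 :=
  (map_ne_zero_iff (toK F) (toK_injective F)).mpr h

/-- `D_i` in `k`. -/
def dk (i : ℕ) : RatFunc F := toK F (Dpoly F i)

/-- `L_i` in `k`. -/
def lk (i : ℕ) : RatFunc F := toK F (Lpoly F i)

/-- `θ` in `k`. -/
def tk : RatFunc F := toK F Polynomial.X

lemma dk_ne (i : ℕ) : dk F i ≠ 0 := toK_ne_zero F (Dpoly_ne_zero F i)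

lemma lk_ne (i : ℕ) : lk F i ≠ 0 := toK_ne_zero F (Lpoly_ne_zero F i)

lemma dk_zero : dk F 0 = 1 := by rw [dk, Dpoly_zero, map_one]

lemma lk_zero : lk F 0 = 1 := by rw [lk, Lpoly_zero, map_one]

lemma dk_succ (i : ℕ) :
    dk F (i + 1) = (tk F ^ (q F) ^ (i + 1) - tk F) * dk F i ^ q F := by
  rw [dk, Dpoly_succ, map_mul, map_sub, map_pow, map_pow]; rfl

lemma lk_succ (j : ℕ) :
    lk F (j + 1) = lk F j * (tk F - tk F ^ (q F) ^ (j + 1)) := by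
  rw [lk, Lpoly_succ, map_mul, map_sub, map_pow]; rfl

lemma tk_pow_sub_ne {i : ℕ} (hi : 0 < i) : tk F ^ (q F) ^ i - tk F ≠ 0 := by
  have h : tk F ^ (q F) ^ i - tk F = toK F (Polynomial.X ^ (q F) ^ i - Polynomial.X) := by
    rw [map_sub, map_pow]; rfl
  rw [h]
  apply toK_ne_zero
  have h2 := X_pow_sub_X_pow_ne_zero F (a := (q F) ^ i) (b := 1)
    (Nat.one_lt_pow hi.ne' (one_lt_q F))
  rwa [pow_one] at h2

lemma tk_sub_pow_ne (j : ℕ) : tk F - tk F ^ (q F) ^ (j + 1) ≠ 0 := by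
  have := tk_pow_sub_ne F (i := j + 1) (Nat.succ_pos j)
  intro heq
  apply this
  rw [← neg_sub, heq, neg_zero]

/-! ### The key telescoping identity -/

/-- The sum `∑_{i+j=m} 1/(D_i · L_j^{q^i})`. -/
def S2 (m : ℕ) : RatFunc F :=
  ∑ i ∈ Finset.range (m + 1), (dk F i)⁻¹ * ((lk F (m - i)) ^ (q F) ^ i)⁻¹

lemma S2_eq (m : ℕ) : S2 F m = if m = 0 then 1 else 0 := by
  induction m with
  | zero => simp [S2, dk_zero, lk_zero]
  | succ m ih =>
    have hS1 : S2 F (m + 1)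
        = ∑ i ∈ Finset.range (m + 2), (dk F i)⁻¹ * ((lk F (m + 1 - i)) ^ (q F) ^ i)⁻¹ := rfl
    have hS0 : S2 F m
        = ∑ i ∈ Finset.range (m + 1), (dk F i)⁻¹ * ((lk F (m - i)) ^ (q F) ^ i)⁻¹ := rfl
    have key : (tk F ^ (q F) ^ (m + 1) - tk F)
          * (∑ i ∈ Finset.range (m + 2), (dk F i)⁻¹ * ((lk F (m + 1 - i)) ^ (q F) ^ i)⁻¹)
        = (∑ i ∈ Finset.range (m + 1), (dk F i)⁻¹ * ((lk F (m - i)) ^ (q F) ^ i)⁻¹) ^ q F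
          - ∑ i ∈ Finset.range (m + 1), (dk F i)⁻¹ * ((lk F (m - i)) ^ (q F) ^ i)⁻¹ := by
      rw [Finset.mul_sum]
      have step : ∀ i ∈ Finset.range (m + 2),
          (tk F ^ (q F) ^ (m + 1) - tk F) * ((dk F i)⁻¹ * ((lk F (m + 1 - i)) ^ (q F) ^ i)⁻¹)
          = (if 1 ≤ i then ((dk F (i - 1))⁻¹ * ((lk F (m - (i - 1))) ^ (q F) ^ (i - 1))⁻¹) ^ q F
              else 0)
            + (if i ≤ m then -((dk F i)⁻¹ * ((lk F (m - i)) ^ (q F) ^ i)⁻¹) else 0) := by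
        intro i hi
        rw [Finset.mem_range] at hi
        have hsplit : tk F ^ (q F) ^ (m + 1) - tk F
            = (tk F ^ (q F) ^ i - tk F) + (tk F ^ (q F) ^ (m + 1) - tk F ^ (q F) ^ i) := by ring
        rw [hsplit, add_mul]
        congr 1
        · -- part with (t^{q^i} - t)
          by_cases hi1 : 1 ≤ i
          · obtain ⟨i', rfl⟩ : ∃ i', i = i' + 1 := ⟨i - 1, by omega⟩
            rw [if_pos hi1]
            simp only [Nat.add_sub_cancel]
            have h2 : m + 1 - (i' + 1) = m - i' := by omega
            rw [h2, dk_succ]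
            have ht : tk F ^ (q F) ^ (i' + 1) - tk F ≠ 0 := tk_pow_sub_ne F (Nat.succ_pos i')
            have hd : dk F i' ≠ 0 := dk_ne F i'
            have hl : lk F (m - i') ≠ 0 := lk_ne F (m - i')
            have h3 : (lk F (m - i')) ^ (q F) ^ (i' + 1)
                = ((lk F (m - i')) ^ (q F) ^ i') ^ q F := by
              rw [← pow_mul, ← pow_succ]
            rw [h3, mul_pow, mul_inv, inv_pow, inv_pow]
            field_simp
          · have hi0 : i = 0 := by omega
            subst hi0
            rw [if_neg hi1, pow_zero, pow_one, sub_self, zero_mul]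
        · -- part with (t^{q^{m+1}} - t^{q^i})
          by_cases him : i ≤ m
          · rw [if_pos him]
            have hj : m + 1 - i = (m - i) + 1 := by omega
            have h1 : tk F ^ (q F) ^ (m + 1) - tk F ^ (q F) ^ i
                = (tk F ^ (q F) ^ ((m - i) + 1) - tk F) ^ (q F) ^ i := by
              rw [ratF_sub_pow_qpow, ← pow_mul, ← pow_add]
              have hx2 : (m - i) + 1 + i = m + 1 := by omega
              rw [hx2]
            rw [h1, hj, lk_succ]
            have hx : tk F ^ (q F) ^ ((m - i) + 1) - tk F
                = -(tk F - tk F ^ (q F) ^ ((m - i) + 1)) := by ring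
            rw [hx, ratF_neg_pow_qpow, mul_pow, mul_inv]
            have hc : (tk F - tk F ^ (q F) ^ ((m - i) + 1)) ^ (q F) ^ i ≠ 0 :=
              pow_ne_zero _ (tk_sub_pow_ne F (m - i))
            have hd : dk F i ≠ 0 := dk_ne F i
            have hl : (lk F (m - i)) ^ (q F) ^ i ≠ 0 := pow_ne_zero _ (lk_ne F (m - i))
            field_simp
          · have hieq : i = m + 1 := by omega
            subst hieq
            rw [if_neg him, sub_self, zero_mul]
      rw [Finset.sum_congr rfl step, Finset.sum_add_distrib]
      have hB : ∑ i ∈ Finset.range (m + 2),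
          (if 1 ≤ i then ((dk F (i - 1))⁻¹ * ((lk F (m - (i - 1))) ^ (q F) ^ (i - 1))⁻¹) ^ q F
            else 0)
          = (∑ i ∈ Finset.range (m + 1), (dk F i)⁻¹ * ((lk F (m - i)) ^ (q F) ^ i)⁻¹) ^ q F := by
        rw [Finset.sum_range_succ']
        simp only [Nat.add_sub_cancel, if_neg (by omega : ¬ 1 ≤ 0), add_zero]
        rw [ratF_sum_pow_q]
        apply Finset.sum_congr rfl
        intro i _
        rw [if_pos (by omega : 1 ≤ i + 1)]
      have hA : ∑ i ∈ Finset.range (m + 2),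
          (if i ≤ m then -((dk F i)⁻¹ * ((lk F (m - i)) ^ (q F) ^ i)⁻¹) else 0)
          = -(∑ i ∈ Finset.range (m + 1), (dk F i)⁻¹ * ((lk F (m - i)) ^ (q F) ^ i)⁻¹) := by
        rw [Finset.sum_range_succ, if_neg (by omega : ¬ m + 1 ≤ m), add_zero]
        rw [← Finset.sum_neg_distrib]
        apply Finset.sum_congr rfl
        intro i hi
        rw [Finset.mem_range] at hi
        rw [if_pos (by omega : i ≤ m)]
      rw [hB, hA]
      ring
    rw [← hS0, ← hS1, ih] at key
    have hz : ((if m = 0 then (1:RatFunc F) else 0) ^ q F - (if m = 0 then (1:RatFunc F) else 0))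
        = 0 := by
      split_ifs with h <;> simp [(q_pos F).ne']
    rw [hz] at key
    have hne := tk_pow_sub_ne F (Nat.succ_pos m)
    rcases mul_eq_zero.mp key with h | h
    · exact absurd h hne
    · rw [if_neg (Nat.succ_ne_zero m)]; exact h

end Aux
/-! ### Power series layer -/

section PS

lemma coeff_eC_of_eq {n i : ℕ} (h : (q F) ^ i = n) :
    PowerSeries.coeff n (eC F) = (dk F i)⁻¹ := by
  unfold eC
  rw [PowerSeries.coeff_mk]
  rw [Finset.sum_eq_single i]
  · rw [if_pos h]; rfl
  · intro b _ hbi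
    rw [if_neg]
    intro hq
    exact hbi (Nat.pow_right_injective (two_le_q F) (hq.trans h.symm))
  · intro hni
    exfalso
    apply hni
    rw [Finset.mem_range]
    have := Nat.lt_pow_self (n := i) (one_lt_q F)
    omega

lemma coeff_eC_of_ne {n : ℕ} (h : ∀ i, (q F) ^ i ≠ n) :
    PowerSeries.coeff n (eC F) = 0 := by
  unfold eC
  rw [PowerSeries.coeff_mk]
  apply Finset.sum_eq_zero
  intro i _
  rw [if_neg (h i)]

lemma coeff_eC_zero : PowerSeries.coeff 0 (eC F) = 0 := by
  apply coeff_eC_of_ne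
  intro i
  have : 0 < (q F) ^ i := pow_pos (q_pos F) i
  omega

lemma coeff_eC_one : PowerSeries.coeff 1 (eC F) = 1 := by
  rw [coeff_eC_of_eq F (pow_zero (q F)), dk_zero, inv_one]

/-- A helper: the coefficient of `e_C` as a sum over any large enough range. -/
lemma coeff_eC_sum_range (c M : ℕ) (hM : ∀ i, (q F) ^ i = c → i < M) :
    PowerSeries.coeff c (eC F)
      = ∑ i ∈ Finset.range M, if (q F) ^ i = c then (dk F i)⁻¹ else 0 := by
  by_cases hex : ∃ i, (q F) ^ i = c
  · obtain ⟨i0, hi0⟩ := hex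
    rw [coeff_eC_of_eq F hi0]
    rw [Finset.sum_eq_single i0]
    · rw [if_pos hi0]
    · intro b _ hbi
      rw [if_neg]
      intro hq
      exact hbi (Nat.pow_right_injective (two_le_q F) (hq.trans hi0.symm))
    · intro hni
      exact absurd (Finset.mem_range.mpr (hM i0 hi0)) hni
  · push_neg at hex
    rw [coeff_eC_of_ne F hex]
    symm
    apply Finset.sum_eq_zero
    intro i _
    rw [if_neg (hex i)]

/-- `W = e_C - z`. -/
def Wser : PowerSeries (RatFunc F) := eC F - PowerSeries.X

lemma coeff_W_zero : PowerSeries.coeff 0 (Wser F) = 0 := by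
  rw [Wser, map_sub, coeff_eC_zero, PowerSeries.coeff_X, if_neg (by omega : (0:ℕ) ≠ 1)]
  simp

lemma coeff_W_one : PowerSeries.coeff 1 (Wser F) = 0 := by
  rw [Wser, map_sub, coeff_eC_one, PowerSeries.coeff_X, if_pos rfl]
  simp

lemma coeff_W_of_not_dvd {n : ℕ} (h : ¬ q F ∣ n) :
    PowerSeries.coeff n (Wser F) = 0 := by
  by_cases h1 : n = 1
  · subst h1; exact coeff_W_one F
  · rw [Wser, map_sub, PowerSeries.coeff_X, if_neg h1, sub_zero]
    apply coeff_eC_of_ne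
    intro i hq
    rcases Nat.eq_zero_or_pos i with hi | hi
    · subst hi; rw [pow_zero] at hq; exact h1 hq.symm
    · exact h (hq ▸ dvd_pow_self (q F) hi.ne')

lemma X_sq_dvd_W : (PowerSeries.X : PowerSeries (RatFunc F)) ^ 2 ∣ Wser F := by
  rw [PowerSeries.X_pow_dvd_iff]
  intro m hm
  interval_cases m
  · exact coeff_W_zero F
  · exact coeff_W_one F

lemma coeff_W_pow_lt {j N : ℕ} (h : N < 2 * j) :
    PowerSeries.coeff N (Wser F ^ j) = 0 := by
  have hdvd : ((PowerSeries.X : PowerSeries (RatFunc F)) ^ (2 * j)) ∣ Wser F ^ j := by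
    rw [pow_mul]
    exact pow_dvd_pow_of_dvd (X_sq_dvd_W F) j
  exact PowerSeries.X_pow_dvd_iff.mp hdvd N h

lemma coeff_W_pow_not_dvd (j : ℕ) {N : ℕ} (h : ¬ q F ∣ N) :
    PowerSeries.coeff N (Wser F ^ j) = 0 := by
  induction j generalizing N with
  | zero =>
    rw [pow_zero, PowerSeries.coeff_one, if_neg]
    intro h0
    subst h0
    exact h (dvd_zero _)
  | succ j ih =>
    rw [pow_succ, PowerSeries.coeff_mul]
    apply Finset.sum_eq_zero
    rintro ⟨a, b⟩ hab
    have hab' : a + b = N := Finset.HasAntidiagonal.mem_antidiagonal.mp hab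
    by_cases hqa : q F ∣ a
    · have hqb : ¬ q F ∣ b := fun hh => h (hab' ▸ dvd_add hqa hh)
      rw [coeff_W_of_not_dvd F hqb, mul_zero]
    · rw [ih hqa, zero_mul]

/-- Freshman's dream for coefficients of `q`-th powers of power series. -/
lemma coeff_pow_q (f : PowerSeries (RatFunc F)) (N : ℕ) :
    PowerSeries.coeff N (f ^ q F)
      = if q F ∣ N then (PowerSeries.coeff (N / q F) f) ^ q F else 0 := by
  set P : PowerSeries (RatFunc F) :=
    ∑ n ∈ Finset.range (N + 1),
      PowerSeries.C (PowerSeries.coeff n f) * PowerSeries.X ^ n with hP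
  have hcP : ∀ m, m ≤ N → PowerSeries.coeff m P = PowerSeries.coeff m f := by
    intro m hm
    rw [hP, map_sum]
    rw [Finset.sum_eq_single m]
    · rw [PowerSeries.coeff_C_mul, PowerSeries.coeff_X_pow, if_pos rfl, mul_one]
    · intro b _ hbm
      rw [PowerSeries.coeff_C_mul, PowerSeries.coeff_X_pow, if_neg (fun hh => hbm hh.symm), mul_zero]
    · intro hm2
      exact absurd (Finset.mem_range.mpr (by omega)) hm2
  have hdvd : ((PowerSeries.X : PowerSeries (RatFunc F)) ^ (N + 1)) ∣ f ^ q F - P ^ q F := by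
    refine dvd_trans ?_ (sub_dvd_pow_sub_pow f P (q F))
    rw [PowerSeries.X_pow_dvd_iff]
    intro m hm
    rw [map_sub, hcP m (by omega), sub_self]
  have hN : PowerSeries.coeff N (f ^ q F)
      = PowerSeries.coeff N (P ^ q F) := by
    have h0 := PowerSeries.X_pow_dvd_iff.mp hdvd N (by omega)
    rw [map_sub] at h0
    exact sub_eq_zero.mp h0
  rw [hN, hP, psF_sum_pow_q]
  have hterm : ∀ n ∈ Finset.range (N + 1),
      (PowerSeries.C (PowerSeries.coeff n f) * PowerSeries.X ^ n) ^ q F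
        = PowerSeries.C ((PowerSeries.coeff n f) ^ q F)
            * PowerSeries.X ^ (n * q F) := by
    intro n _
    rw [mul_pow, ← map_pow, ← pow_mul]
  rw [Finset.sum_congr rfl hterm, map_sum]
  by_cases hdv : q F ∣ N
  · rw [if_pos hdv]
    rw [Finset.sum_eq_single (N / q F)]
    · rw [PowerSeries.coeff_C_mul, PowerSeries.coeff_X_pow,
        if_pos (Nat.div_mul_cancel hdv).symm, mul_one]
    · intro b _ hbN
      rw [PowerSeries.coeff_C_mul, PowerSeries.coeff_X_pow, if_neg, mul_zero]
      intro hNb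
      apply hbN
      rw [hNb, Nat.mul_div_cancel _ (q_pos F)]
    · intro hmem
      exact absurd (Finset.mem_range.mpr (by
        have := Nat.div_le_self N (q F); omega)) hmem
  · rw [if_neg hdv]
    apply Finset.sum_eq_zero
    intro b _
    rw [PowerSeries.coeff_C_mul, PowerSeries.coeff_X_pow, if_neg, mul_zero]
    intro hNb
    exact hdv ⟨b, by rw [hNb, Nat.mul_comm]⟩

/-- The inverse `v = z/e_C` of `u = e_C/z`, given by the geometric series `∑ (-1)^j B^j`
written out coefficientwise via `W`. -/
def vser : PowerSeries (RatFunc F) :=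
  PowerSeries.mk fun m => ∑ j ∈ Finset.range (m + 1),
    (-1 : RatFunc F) ^ j * PowerSeries.coeff (m + j) (Wser F ^ j)

/-- The coefficients of `v`. -/
def gam (m : ℕ) : RatFunc F := PowerSeries.coeff m (vser F)

lemma gam_eq (m : ℕ) : gam F m = ∑ j ∈ Finset.range (m + 1),
    (-1 : RatFunc F) ^ j * PowerSeries.coeff (m + j) (Wser F ^ j) := by
  rw [gam, vser, PowerSeries.coeff_mk]

lemma gam_zero : gam F 0 = 1 := by
  rw [gam_eq, Finset.sum_range_one, pow_zero, one_mul, pow_zero]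
  simp

/-- `B` = tail of `u`, so that `u = 1 + B` and `z·B = W`. -/
def Bser : PowerSeries (RatFunc F) :=
  PowerSeries.mk fun m => PowerSeries.coeff (m + 1) (Wser F)

/-- `u = e_C/z`. -/
def user : PowerSeries (RatFunc F) :=
  PowerSeries.mk fun m => PowerSeries.coeff (m + 1) (eC F)

lemma X_mul_B : PowerSeries.X * Bser F = Wser F := by
  ext n
  cases n with
  | zero =>
    have h0 := coeff_W_zero F
    rw [PowerSeries.coeff_zero_eq_constantCoeff] at h0
    rw [PowerSeries.coeff_zero_eq_constantCoeff, map_mul, h0]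
    simp
  | succ n =>
    rw [PowerSeries.coeff_succ_X_mul, Bser, PowerSeries.coeff_mk]

lemma user_eq : user F = 1 + Bser F := by
  ext m
  rw [map_add, user, PowerSeries.coeff_mk, Bser, PowerSeries.coeff_mk]
  have heC : eC F = Wser F + PowerSeries.X := by rw [Wser]; ring
  rw [heC, map_add, PowerSeries.coeff_X, PowerSeries.coeff_one]
  by_cases hm : m = 0
  · subst hm; simp [add_comm]
  · rw [if_neg hm, if_neg (by omega : ¬ m + 1 = 1)]
    ring

lemma constantCoeff_user : PowerSeries.constantCoeff (user F) ≠ 0 := by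
  have : PowerSeries.constantCoeff (user F)
      = PowerSeries.coeff 0 (user F) := by
    rw [PowerSeries.coeff_zero_eq_constantCoeff]
  rw [this, user, PowerSeries.coeff_mk, coeff_eC_one]
  exact one_ne_zero

lemma X_dvd_B : (PowerSeries.X : PowerSeries (RatFunc F)) ∣ Bser F := by
  rw [PowerSeries.X_dvd_iff]
  rw [← PowerSeries.coeff_zero_eq_constantCoeff]
  rw [Bser, PowerSeries.coeff_mk]
  exact coeff_W_one F

lemma coeff_B_pow (m j : ℕ) : PowerSeries.coeff m (Bser F ^ j)
    = PowerSeries.coeff (m + j) (Wser F ^ j) := by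
  have h : PowerSeries.X ^ j * Bser F ^ j = Wser F ^ j := by
    rw [← mul_pow, X_mul_B]
  rw [← h, PowerSeries.coeff_X_pow_mul]

lemma coeff_B_pow_zero {m j : ℕ} (h : m < j) :
    PowerSeries.coeff m (Bser F ^ j) = 0 := by
  have hdvd : (PowerSeries.X : PowerSeries (RatFunc F)) ^ j ∣ Bser F ^ j :=
    pow_dvd_pow_of_dvd (X_dvd_B F) j
  exact PowerSeries.X_pow_dvd_iff.mp hdvd m h

lemma coeff_mul_congr (x a b : PowerSeries (RatFunc F)) (m : ℕ)
    (h : ∀ j ≤ m, PowerSeries.coeff j a = PowerSeries.coeff j b) :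
    PowerSeries.coeff m (x * a) = PowerSeries.coeff m (x * b) := by
  rw [PowerSeries.coeff_mul, PowerSeries.coeff_mul]
  apply Finset.sum_congr rfl
  rintro ⟨s, t⟩ hst
  have hst' := Finset.HasAntidiagonal.mem_antidiagonal.mp hst
  dsimp only at hst' ⊢
  rw [h t (by omega)]

lemma user_mul_vser : user F * vser F = 1 := by
  ext m
  have hV : ∀ j ≤ m, PowerSeries.coeff j (vser F)
      = PowerSeries.coeff j (∑ i ∈ Finset.range (m + 1), (-Bser F) ^ i) := by
    intro j hj
    rw [vser, PowerSeries.coeff_mk, map_sum]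
    have hterm : ∀ i ∈ Finset.range (m + 1),
        PowerSeries.coeff j ((-Bser F) ^ i)
          = (-1 : RatFunc F) ^ i * PowerSeries.coeff (j + i) (Wser F ^ i) := by
      intro i _
      have hneg : (-Bser F) ^ i = PowerSeries.C ((-1 : RatFunc F) ^ i) * Bser F ^ i := by
        rw [neg_pow]
        congr 1
        rw [map_pow, map_neg, map_one]
      rw [hneg, PowerSeries.coeff_C_mul, coeff_B_pow]
    rw [Finset.sum_congr rfl hterm]
    apply Finset.sum_subset
    · exact Finset.range_subset_range.mpr (by omega)
    · intro i _ hi2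
      rw [Finset.mem_range] at hi2
      rw [← coeff_B_pow, coeff_B_pow_zero F (by omega), mul_zero]
  rw [coeff_mul_congr F _ _ _ m hV]
  have hgeom : user F * (∑ i ∈ Finset.range (m + 1), (-Bser F) ^ i)
      = 1 - (-Bser F) ^ (m + 1) := by
    rw [user_eq]
    have h1 : (1 + Bser F) = -((-Bser F) - 1) := by ring
    rw [h1, neg_mul, mul_geom_sum, neg_sub]
  rw [hgeom, map_sub]
  have h2 : PowerSeries.coeff m ((-Bser F) ^ (m + 1)) = 0 := by
    have hneg : (-Bser F) ^ (m+1)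
        = PowerSeries.C ((-1 : RatFunc F) ^ (m+1)) * Bser F ^ (m+1) := by
      rw [neg_pow]
      congr 1
      rw [map_pow, map_neg, map_one]
    rw [hneg, PowerSeries.coeff_C_mul, coeff_B_pow_zero F (by omega), mul_zero]
  rw [h2, sub_zero]

lemma vser_eq_inv :
    (PowerSeries.mk fun m => PowerSeries.coeff (m + 1) (eC F))⁻¹ = vser F := by
  refine (PowerSeries.inv_eq_iff_mul_eq_one ?_).mpr ?_
  · exact constantCoeff_user F
  · rw [mul_comm]
    exact user_mul_vser F

end PS
/-! ### The Frobenius property of `v` and the main coefficient computation -/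

section Gam

lemma gam_q_mul (m : ℕ) : gam F (q F * m) = (gam F m) ^ q F := by
  classical
  rw [gam_eq, gam_eq]
  have hvanish : ∀ x ∈ Finset.range (q F * m + 1),
      (-1 : RatFunc F) ^ x * PowerSeries.coeff (q F * m + x) (Wser F ^ x) ≠ 0 →
        q F ∣ x := by
    intro x _ hx
    by_contra hqx
    apply hx
    have hnd : ¬ q F ∣ (q F * m + x) := by
      intro hdd
      exact hqx ((Nat.dvd_add_right (Dvd.intro m rfl)).mp hdd)
    rw [coeff_W_pow_not_dvd F _ hnd, mul_zero]
  rw [← Finset.sum_filter_of_ne hvanish, ratF_sum_pow_q]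
  refine Finset.sum_nbij' (i := fun x => x / q F) (j := fun t => q F * t) ?_ ?_ ?_ ?_ ?_
  · intro a ha
    rw [Finset.mem_filter, Finset.mem_range] at ha
    rw [Finset.mem_range]
    obtain ⟨c, rfl⟩ := ha.2
    rw [Nat.mul_div_cancel_left _ (q_pos F)]
    have h2 := two_le_q F
    nlinarith [ha.1]
  · intro t ht
    rw [Finset.mem_range] at ht
    rw [Finset.mem_filter, Finset.mem_range]
    constructor
    · have h2 := two_le_q F
      nlinarith
    · exact Dvd.intro t rfl
  · intro a ha
    rw [Finset.mem_filter] at ha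
    exact Nat.mul_div_cancel' ha.2
  · intro t _
    rw [Nat.mul_div_cancel_left _ (q_pos F)]
  · intro a ha
    rw [Finset.mem_filter] at ha
    obtain ⟨c, rfl⟩ := ha.2
    rw [Nat.mul_div_cancel_left _ (q_pos F)]
    have h1 : Wser F ^ (q F * c) = (Wser F ^ c) ^ q F := by
      rw [← pow_mul, Nat.mul_comm]
    have h2 : q F * m + q F * c = q F * (m + c) := by ring
    rw [h1, h2, coeff_pow_q F, if_pos (Dvd.intro (m+c) rfl),
      Nat.mul_div_cancel_left _ (q_pos F)]
    have h3 : (-1 : RatFunc F) ^ (q F * c) = ((-1 : RatFunc F) ^ c) ^ q F := by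
      rw [← pow_mul, Nat.mul_comm]
    rw [h3, ← mul_pow]

lemma gam_qpow_sub (n : ℕ) : ∀ t, t ≤ n →
    gam F ((q F) ^ n - (q F) ^ t) = ((lk F (n - t)) ^ (q F) ^ t)⁻¹ := by
  induction n with
  | zero =>
    intro t ht
    have ht0 : t = 0 := by omega
    subst ht0
    simp [gam_zero, lk_zero]
  | succ n ih =>
    have hstep : ∀ s, s ≤ n →
        gam F ((q F) ^ (n + 1) - (q F) ^ (s + 1)) = ((lk F (n - s)) ^ (q F) ^ (s + 1))⁻¹ := by
      intro s hs
      have h1 : (q F) ^ (n + 1) - (q F) ^ (s + 1) = q F * ((q F) ^ n - (q F) ^ s) := by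
        rw [Nat.mul_sub]
        congr 1 <;> rw [← pow_succ']
      rw [h1, gam_q_mul, ih s hs, inv_pow, ← pow_mul, ← pow_succ, ← inv_pow, inv_pow]
    intro t ht
    cases t with
    | succ s =>
      have hns : n + 1 - (s + 1) = n - s := by omega
      rw [hns]
      exact hstep s (by omega)
    | zero =>
      -- the coefficient equation at `q^{n+1} - 1` coming from `u·v = 1`
      set N : ℕ := (q F) ^ (n + 1) - 1 with hN
      have hqn1 : 1 < (q F) ^ (n + 1) := Nat.one_lt_pow (Nat.succ_ne_zero n) (one_lt_q F)
      have hqle : ∀ i, i ≤ n + 1 → (q F) ^ i ≤ (q F) ^ (n + 1) :=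
        fun i hi => Nat.pow_le_pow_right (Nat.le_of_lt (one_lt_q F)) hi
      have h0 : PowerSeries.coeff N (user F * vser F) = 0 := by
        rw [user_mul_vser, PowerSeries.coeff_one, if_neg (by omega : ¬ N = 0)]
      rw [PowerSeries.coeff_mul, Finset.Nat.sum_antidiagonal_eq_sum_range_succ_mk] at h0
      have huser : ∀ a, PowerSeries.coeff a (user F)
          = PowerSeries.coeff (a + 1) (eC F) := by
        intro a
        rw [user, PowerSeries.coeff_mk]
      have hE : ∑ i ∈ Finset.range (n + 2), (dk F i)⁻¹ * gam F ((q F) ^ (n + 1) - (q F) ^ i)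
          = 0 := by
        rw [← h0]
        symm
        calc ∑ a ∈ Finset.range (N + 1),
              PowerSeries.coeff a (user F)
                * PowerSeries.coeff (N - a) (vser F)
            = ∑ a ∈ Finset.range (N + 1), ∑ i ∈ Finset.range (n + 2),
                (if (q F) ^ i = a + 1 then (dk F i)⁻¹ else 0) * gam F (N - a) := by
              apply Finset.sum_congr rfl
              intro a ha
              rw [Finset.mem_range] at ha
              rw [huser a, coeff_eC_sum_range F (a + 1) (n + 2) ?_, Finset.sum_mul]
              · rfl
              · intro i hqi
                by_contra hii
                have h5 : n + 2 ≤ i := by omega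
                have h6 : (q F) ^ (n + 2) ≤ (q F) ^ i :=
                  Nat.pow_le_pow_right (Nat.le_of_lt (one_lt_q F)) h5
                have h7 : (q F) ^ (n + 1) < (q F) ^ (n + 2) :=
                  Nat.pow_lt_pow_right (one_lt_q F) (by omega)
                omega
          _ = ∑ i ∈ Finset.range (n + 2), ∑ a ∈ Finset.range (N + 1),
                (if a = (q F) ^ i - 1 then (dk F i)⁻¹ * gam F (N - a) else 0) := by
              rw [Finset.sum_comm]
              apply Finset.sum_congr rfl
              intro i _
              apply Finset.sum_congr rfl
              intro a _
              have hiff : ((q F) ^ i = a + 1) ↔ (a = (q F) ^ i - 1) := by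
                have := pow_pos (q_pos F) i
                omega
              rw [ite_mul, zero_mul]
              exact if_congr hiff rfl rfl
          _ = ∑ i ∈ Finset.range (n + 2), (dk F i)⁻¹ * gam F ((q F) ^ (n + 1) - (q F) ^ i) := by
              apply Finset.sum_congr rfl
              intro i hi
              rw [Finset.mem_range] at hi
              rw [Finset.sum_ite_eq' (Finset.range (N + 1)) ((q F) ^ i - 1)]
              have hile : (q F) ^ i ≤ (q F) ^ (n + 1) := hqle i (by omega)
              have hpos : 0 < (q F) ^ i := pow_pos (q_pos F) i
              rw [if_pos (Finset.mem_range.mpr (by omega))]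
              have harg : N - ((q F) ^ i - 1) = (q F) ^ (n + 1) - (q F) ^ i := by omega
              rw [harg]
      rw [Finset.sum_range_succ'] at hE
      have hf0 : (dk F 0)⁻¹ * gam F ((q F) ^ (n + 1) - (q F) ^ 0)
          = gam F ((q F) ^ (n + 1) - 1) := by
        rw [dk_zero, inv_one, one_mul, pow_zero]
      rw [hf0] at hE
      have hfi : ∀ i ∈ Finset.range (n + 1),
          (dk F (i + 1))⁻¹ * gam F ((q F) ^ (n + 1) - (q F) ^ (i + 1))
            = (dk F (i + 1))⁻¹ * ((lk F (n - i)) ^ (q F) ^ (i + 1))⁻¹ := by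
        intro i hi
        rw [Finset.mem_range] at hi
        rw [hstep i (by omega)]
      rw [Finset.sum_congr rfl hfi] at hE
      -- the identity `S2 (n+1) = 0`
      have hI := S2_eq F (n + 1)
      rw [if_neg (Nat.succ_ne_zero n)] at hI
      have hI' : S2 F (n + 1)
          = ∑ i ∈ Finset.range (n + 2), (dk F i)⁻¹ * ((lk F (n + 1 - i)) ^ (q F) ^ i)⁻¹ := rfl
      rw [hI', Finset.sum_range_succ'] at hI
      have hg0 : (dk F 0)⁻¹ * ((lk F (n + 1 - 0)) ^ (q F) ^ 0)⁻¹ = (lk F (n + 1))⁻¹ := by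
        rw [dk_zero, inv_one, one_mul, pow_zero, pow_one, Nat.sub_zero]
      rw [hg0] at hI
      have hgi : ∀ i ∈ Finset.range (n + 1),
          (dk F (i + 1))⁻¹ * ((lk F (n + 1 - (i + 1))) ^ (q F) ^ (i + 1))⁻¹
            = (dk F (i + 1))⁻¹ * ((lk F (n - i)) ^ (q F) ^ (i + 1))⁻¹ := by
        intro i _
        have : n + 1 - (i + 1) = n - i := by omega
        rw [this]
      rw [Finset.sum_congr rfl hgi] at hI
      have hfin : gam F ((q F) ^ (n + 1) - 1) = (lk F (n + 1))⁻¹ := by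
        linear_combination hE - hI
      rw [pow_zero, pow_one, Nat.sub_zero]
      exact hfin

lemma gam_pow_sub_one (i : ℕ) : gam F ((q F) ^ i - 1) = (lk F i)⁻¹ := by
  have h := gam_qpow_sub F i 0 (Nat.zero_le i)
  rwa [pow_zero, pow_one, Nat.sub_zero] at h

lemma BCnum_eq (i : ℕ) :
    BCnum F ((q F) ^ i - 1) = toK F (cfact F ((q F) ^ i - 1)) * (lk F i)⁻¹ := by
  rw [BCnum, vser_eq_inv]
  rw [show PowerSeries.coeff ((q F) ^ i - 1) (vser F) = gam F ((q F) ^ i - 1) from rfl]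
  rw [gam_pow_sub_one]

lemma coeff_eC_pow_eq_zero {n m : ℕ} (h : n < m) :
    PowerSeries.coeff n (eC F ^ m) = 0 := by
  have hX : (PowerSeries.X : PowerSeries (RatFunc F)) ∣ eC F := by
    rw [PowerSeries.X_dvd_iff, ← PowerSeries.coeff_zero_eq_constantCoeff]
    exact coeff_eC_zero F
  exact PowerSeries.X_pow_dvd_iff.mp (pow_dvd_pow_of_dvd hX m) n h

end Gam
/-- For `r ≥ 1` and `n ≥ q^{r−1} − 1`, the multi-poly-Bernoulli-Carlitz
number of index `s = (1, …, 1)` (r ones) and `j = (0, …, 0)` (whose associated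
Anderson-Thakur data are `u_{l 0} = 1` since `H_0 = 1`) satisfies
`BC_n^{(1,…,1),(0,…,0)} = Σ {n brace q^{i_1} − 1}_C · BC_{q^{i_1}−1} ·
  ∏_{l=2}^r BC_{q^{i_l}−1}/Π(q^{i_l}−1)`,
the sum over strictly decreasing tuples `i_1 > ⋯ > i_r ≥ 0` with `q^{i_1} − 1 ≤ n`. -/
theorem MPBC_ones (r : ℕ) (hr : 0 < r) (n : ℕ) (hn : (q F) ^ (r - 1) - 1 ≤ n) :
    MPBC F (fun _ : Fin r => 1) (fun _ => (1 : Polynomial F)) n =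
      ∑ i ∈ (decTuples r (n + 1)).filter (fun i => (q F) ^ lead i - 1 ≤ n),
        StC F n ((q F) ^ lead i - 1) * BCnum F ((q F) ^ lead i - 1) *
          ∏ l ∈ Finset.univ.erase (⟨0, hr⟩ : Fin r),
            BCnum F ((q F) ^ (i l) - 1) / toK F (cfact F ((q F) ^ (i l) - 1)) := by
  classical
  have hvan : ∀ x ∈ decTuples r (n + 1),
      x ∉ (decTuples r (n + 1)).filter (fun i => (q F) ^ lead i - 1 ≤ n) →
        StC F n ((q F) ^ lead x - 1) * BCnum F ((q F) ^ lead x - 1) *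
          ∏ l ∈ Finset.univ.erase (⟨0, hr⟩ : Fin r),
            BCnum F ((q F) ^ (x l) - 1) / toK F (cfact F ((q F) ^ (x l) - 1)) = 0 := by
    intro x hx hxf
    have hnot : ¬ ((q F) ^ lead x - 1 ≤ n) := by
      intro hle
      exact hxf (Finset.mem_filter.mpr ⟨hx, hle⟩)
    have hcz : PowerSeries.coeff n (eC F ^ ((q F) ^ lead x - 1)) = 0 :=
      coeff_eC_pow_eq_zero F (by omega)
    rw [StC, hcz, mul_zero, zero_mul, zero_mul, zero_mul]
  rw [Finset.sum_subset (Finset.filter_subset _ _) hvan]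
  rw [MPBC, Finset.mul_sum]
  apply Finset.sum_congr rfl
  intro i hi
  have hlead : lead i = i (⟨0, hr⟩ : Fin r) := dif_pos hr
  have hcne : ∀ j : ℕ, toK F (cfact F j) ≠ 0 := fun j => toK_ne_zero F (cfact_ne_zero F j)
  have hprod : ∀ l : Fin r, BCnum F ((q F) ^ (i l) - 1) / toK F (cfact F ((q F) ^ (i l) - 1))
      = (lk F (i l))⁻¹ := by
    intro l
    rw [BCnum_eq, div_eq_mul_inv, mul_comm (toK F _) ((lk F (i l))⁻¹), mul_assoc,
      mul_inv_cancel₀ (hcne _), mul_one]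
  have hSB : StC F n ((q F) ^ lead i - 1) * BCnum F ((q F) ^ lead i - 1)
      = toK F (cfact F n) * PowerSeries.coeff n (eC F ^ ((q F) ^ lead i - 1))
          * (lk F (lead i))⁻¹ := by
    rw [StC, BCnum_eq]
    have h1 : toK F (cfact F ((q F) ^ lead i - 1)) ≠ 0 := hcne _
    field_simp
  have hbody : ∀ l : Fin r,
      (toK F ((1 : Polynomial F))) ^ ((q F) ^ (i l)) * ((toK F (Lpoly F (i l))) ^ (1 : ℕ))⁻¹
        = (lk F (i l))⁻¹ := by
    intro l
    rw [map_one, one_pow, one_mul, pow_one]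
    rfl
  rw [Finset.prod_congr rfl (fun l _ => hbody l)]
  rw [Finset.prod_congr rfl (fun l (_ : l ∈ Finset.univ.erase (⟨0, hr⟩ : Fin r)) => hprod l)]
  rw [hSB]
  rw [← Finset.mul_prod_erase Finset.univ (fun l => (lk F (i l))⁻¹)
    (Finset.mem_univ (⟨0, hr⟩ : Fin r))]
  rw [hlead]
  ring

end Carlitz
end
end

section
/- Let r ≥ 2, s = (s_1, …, s_r) ∈ ℕ^r, j = (j_1, …, j_r) ∈ J_s, and m ≥ r − 1. Then BC_{q^m − 1}^{s,j} = BC_{q^m − 1}^{(s_1),(j_1)} · Σ_{α=1}^{m−(r−2)} (1/Π(q^{m−α} − 1)) · BC_{q^{m−α} − 1}^{(s_2,…,s_r),(j_2,…,j_r)}. -/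
open Polynomial PowerSeries

noncomputable section

namespace Carlitz

variable (F : Type) [Field F] [Fintype F]

lemma one_le_q_pow (a : ℕ) : 1 ≤ (q F) ^ a :=
  Nat.one_le_pow _ _ (by have := two_le_q F; omega)

lemma lt_q_pow (a : ℕ) : a < (q F) ^ a :=
  Nat.lt_pow_self (by have := two_le_q F; omega)

lemma pred_mod (d n : ℕ) (hd : 1 ≤ d) (h : d ∣ n + 1) : n % d = d - 1 := by
  obtain ⟨c, hc⟩ := h
  rcases Nat.eq_zero_or_pos c with rfl | hcpos
  · simp at hc
  obtain ⟨c', rfl⟩ : ∃ c', c = c' + 1 := ⟨c - 1, by omega⟩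
  rw [Nat.mul_add, Nat.mul_one] at hc
  have hn : n = (d - 1) + d * c' := by omega
  rw [hn, Nat.add_mul_mod_self_left, Nat.mod_eq_of_lt (by omega)]

lemma toK_cfact_ne_zero (n : ℕ) : toK F (cfact F n) ≠ 0 := by
  have h : cfact F n ≠ 0 := by
    simp only [cfact]
    rw [Finset.prod_ne_zero_iff]
    intro i _
    exact pow_ne_zero _ (Dpoly_ne_zero F i)
  simpa [toK] using RatFunc.algebraMap_ne_zero h

/-- Truncation of the Carlitz exponential to a polynomial. -/
def Epoly (M : ℕ) : Polynomial (RatFunc F) :=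
  ∑ a ∈ Finset.range (M + 1), Polynomial.C ((toK F (Dpoly F a))⁻¹) * Polynomial.X ^ (q F) ^ a

lemma coeff_Epoly (M n : ℕ) :
    (Epoly F M).coeff n
      = ∑ a ∈ Finset.range (M + 1), if n = (q F) ^ a then (toK F (Dpoly F a))⁻¹ else 0 := by
  simp only [Epoly]
  rw [Polynomial.finset_sum_coeff]
  refine Finset.sum_congr rfl fun a _ => ?_
  rw [Polynomial.coeff_C_mul, Polynomial.coeff_X_pow, mul_ite, mul_one, mul_zero]

lemma coeff_pow_sparse (c : ℕ → RatFunc F) (A : ℕ) (hA : 0 < A) (hc0 : c 0 = 1) :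
    ∀ k, k ≤ q F - 1 → ∀ n, k ≤ n % q F →
      ((∑ a ∈ Finset.range A, Polynomial.C (c a) * Polynomial.X ^ (q F) ^ a) ^ k).coeff n
        = if n = k then 1 else 0 := by
  intro k
  induction k with
  | zero =>
    intro _ n _
    simp [Polynomial.coeff_one]
  | succ k ih =>
    intro hk n hn
    have hq : 2 ≤ q F := two_le_q F
    have hsplit : (∑ a ∈ Finset.range A, Polynomial.C (c a) * Polynomial.X ^ (q F) ^ a) ^ (k+1)
        = ∑ a ∈ Finset.range A, Polynomial.C (c a) *
            ((∑ b ∈ Finset.range A, Polynomial.C (c b) * Polynomial.X ^ (q F) ^ b) ^ k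
              * Polynomial.X ^ (q F) ^ a) := by
      rw [pow_succ', Finset.sum_mul]
      exact Finset.sum_congr rfl fun a _ => by ring
    rw [hsplit, Polynomial.finset_sum_coeff]
    have hn1 : 1 ≤ n := by
      have := Nat.mod_le n (q F); omega
    rw [Finset.sum_eq_single_of_mem 0 (Finset.mem_range.mpr hA)]
    · rw [Polynomial.coeff_C_mul, Polynomial.coeff_mul_X_pow', pow_zero, if_pos hn1]
      have hmod : (n - 1) % q F = n % q F - 1 := by
        have hdm := Nat.div_add_mod n (q F)
        have hlt : n % q F < q F := Nat.mod_lt _ (by omega)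
        have hn' : n - 1 = (n % q F - 1) + q F * (n / q F) := by omega
        rw [hn', Nat.add_mul_mod_self_left, Nat.mod_eq_of_lt (by omega)]
      rw [ih (by omega) (n - 1) (by omega), hc0, one_mul]
      by_cases h : n = k + 1
      · rw [if_pos (by omega), if_pos h]
      · rw [if_neg (by omega), if_neg h]
    · intro a ha hane
      rw [Finset.mem_range] at ha
      rw [Polynomial.coeff_C_mul, Polynomial.coeff_mul_X_pow']
      by_cases hle : (q F) ^ a ≤ n
      · rw [if_pos hle]
        obtain ⟨w, hw⟩ : ∃ w, (q F) ^ a = (q F) * w :=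
          ⟨(q F) ^ (a - 1), by rw [← pow_succ']; congr 1; omega⟩
        have hmod2 : (n - (q F) ^ a) % q F = n % q F := by
          conv_rhs => rw [show n = (n - (q F) ^ a) + (q F) * w by omega]
          rw [Nat.add_mul_mod_self_left]
        rw [ih (by omega) _ (by omega)]
        have hne2 : ¬ (n - (q F) ^ a = k) := by
          intro hcon
          rw [hcon, Nat.mod_eq_of_lt (by omega)] at hmod2
          omega
        rw [if_neg hne2, mul_zero]
      · rw [if_neg hle, mul_zero]

lemma Epoly_pow_char (M i : ℕ) :
    Epoly F M ^ (q F) ^ i =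
      Polynomial.expand (RatFunc F) ((q F) ^ i)
        (∑ a ∈ Finset.range (M + 1),
          Polynomial.C ((toK F (Dpoly F a))⁻¹ ^ (q F) ^ i) * Polynomial.X ^ (q F) ^ a) := by
  haveI hch : CharP F (ringChar F) := ringChar.charP F
  obtain ⟨e, hp, hcard⟩ := FiniteField.card F (ringChar F)
  haveI : Fact (Nat.Prime (ringChar F)) := ⟨hp⟩
  haveI : CharP (RatFunc F) (ringChar F) :=
    charP_of_injective_ringHom (RatFunc.algebraMap_injective F) (ringChar F)
  haveI : CharP (Polynomial (RatFunc F)) (ringChar F) := by infer_instance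
  haveI : ExpChar (Polynomial (RatFunc F)) (ringChar F) := ExpChar.prime hp
  have hqe : q F = (ringChar F) ^ (e : ℕ) := hcard
  rw [map_sum]
  simp only [Epoly]
  rw [show (q F) ^ i = (ringChar F) ^ ((e : ℕ) * i) by rw [hqe, ← pow_mul]]
  rw [sum_pow_char_pow]
  refine Finset.sum_congr rfl fun a _ => ?_
  rw [map_mul, Polynomial.expand_C, mul_pow, ← Polynomial.C_pow]
  congr 1
  rw [map_pow, Polynomial.expand_X, ← pow_mul, ← pow_mul]
  congr 1
  exact Nat.mul_comm _ _

lemma coeff_Epoly_pow (M : ℕ) : ∀ i : ℕ, ∀ n, n % (q F) ^ i = (q F) ^ i - 1 →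
    (Epoly F M ^ ((q F) ^ i - 1)).coeff n = if n = (q F) ^ i - 1 then 1 else 0 := by
  intro i
  induction i with
  | zero =>
    intro n hn
    simp [Polynomial.coeff_one]
  | succ i ih =>
    intro n hn
    have hq : 2 ≤ q F := two_le_q F
    have hQi : 1 ≤ (q F) ^ i := one_le_q_pow F i
    have hQsi : (q F) ^ (i+1) = (q F) ^ i * (q F) := pow_succ _ _
    have hQsi1 : 1 ≤ (q F) ^ (i+1) := one_le_q_pow F (i+1)
    have hdvd1 : (q F) ^ (i+1) ∣ n + 1 := by
      have hdm := Nat.div_add_mod n ((q F) ^ (i+1))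
      refine ⟨n / (q F) ^ (i+1) + 1, ?_⟩
      rw [Nat.mul_add, Nat.mul_one]
      omega
    obtain ⟨c, hc⟩ := hdvd1
    have hcpos : 1 ≤ c := by
      rcases Nat.eq_zero_or_pos c with rfl | h
      · simp at hc
      · exact h
    have hn_ge : (q F) ^ (i+1) - 1 ≤ n := by
      have h1 : (q F) ^ (i+1) * 1 ≤ (q F) ^ (i+1) * c := Nat.mul_le_mul_left _ hcpos
      omega
    obtain ⟨Q', hQ'⟩ : ∃ Q', q F = Q' + 1 := ⟨q F - 1, by omega⟩
    have hexp : ((q F) ^ i - 1) + (q F) ^ i * (q F - 1) = (q F) ^ (i+1) - 1 := by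
      have h2 : (q F) ^ i * (q F - 1) + (q F) ^ i = (q F) ^ i * (q F) := by
        rw [← Nat.mul_succ]
        congr 1
        omega
      omega
    have hsplit : Epoly F M ^ ((q F) ^ (i+1) - 1)
        = Epoly F M ^ ((q F) ^ i - 1) * Polynomial.expand (RatFunc F) ((q F) ^ i)
            ((∑ a ∈ Finset.range (M + 1),
              Polynomial.C ((toK F (Dpoly F a))⁻¹ ^ (q F) ^ i) * Polynomial.X ^ (q F) ^ a)
                ^ (q F - 1)) := by
      rw [map_pow, ← Epoly_pow_char, ← pow_mul, ← pow_add, hexp]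
    have hnmod : n % (q F) ^ i = (q F) ^ i - 1 := by
      apply pred_mod _ _ (by omega)
      exact dvd_trans (pow_dvd_pow _ (by omega)) ⟨c, hc⟩
    rw [hsplit, Polynomial.coeff_mul]
    have hmem : ((q F) ^ i - 1, n - ((q F) ^ i - 1)) ∈ Finset.HasAntidiagonal.antidiagonal n := by
      rw [Finset.HasAntidiagonal.mem_antidiagonal]; omega
    rw [Finset.sum_eq_single_of_mem _ hmem ?side]
    case side =>
      intro b hb hbne
      rw [Finset.HasAntidiagonal.mem_antidiagonal] at hb
      rw [Polynomial.coeff_expand (show 0 < (q F) ^ i by omega)]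
      by_cases hd : (q F) ^ i ∣ b.2
      · obtain ⟨d, hdd⟩ := hd
        have hb1mod : b.1 % (q F) ^ i = (q F) ^ i - 1 := by
          rw [← hnmod, ← hb, hdd, Nat.add_mul_mod_self_left]
        rw [ih b.1 hb1mod]
        by_cases hb1 : b.1 = (q F) ^ i - 1
        · exact absurd (Prod.ext hb1 (by omega)) hbne
        · rw [if_neg hb1, zero_mul]
      · rw [if_neg hd, mul_zero]
    have hA1 : (Epoly F M ^ ((q F) ^ i - 1)).coeff ((q F) ^ i - 1) = 1 := by
      rw [ih _ (Nat.mod_eq_of_lt (by omega)), if_pos rfl]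
    rw [hA1, one_mul, Polynomial.coeff_expand (show 0 < (q F) ^ i by omega)]
    have hwpos : 1 ≤ (q F) * c := by
      have := Nat.mul_le_mul (show 1 ≤ q F by omega) hcpos
      omega
    obtain ⟨w, hw⟩ : ∃ w, (q F) * c = w + 1 := ⟨(q F) * c - 1, by omega⟩
    have hn1 : n + 1 = (q F) ^ i * w + (q F) ^ i := by
      rw [hc, hQsi, mul_assoc, hw, Nat.mul_add, Nat.mul_one]
    have hsub : n - ((q F) ^ i - 1) = (q F) ^ i * w := by omega
    rw [hsub, if_pos ⟨w, rfl⟩, Nat.mul_div_cancel_left _ (show 0 < (q F) ^ i by omega)]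
    have hwmod : w % q F = q F - 1 := pred_mod _ _ (by omega) ⟨c, by omega⟩
    rw [coeff_pow_sparse F (fun a => (toK F (Dpoly F a))⁻¹ ^ (q F) ^ i) (M + 1)
      (Nat.succ_pos M) (by simp [Dpoly, toK]) (q F - 1) le_rfl w (by omega)]
    by_cases hcc : c = 1
    · rw [hcc] at hw hc
      rw [if_pos (by omega), if_pos (by omega)]
    · have hw_ne : w ≠ q F - 1 := by
        intro hcon
        have h2 : q F * c = q F * 1 := by omega
        exact hcc (Nat.eq_of_mul_eq_mul_left (by omega) h2)
      have hn_ne : n ≠ (q F) ^ (i+1) - 1 := by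
        intro hcon
        have h2 : (q F) ^ (i+1) * c = (q F) ^ (i+1) * 1 := by omega
        exact hcc (Nat.eq_of_mul_eq_mul_left (by omega) h2)
      rw [if_neg hw_ne, if_neg hn_ne]

lemma coeff_eC_pow_eq (M k n : ℕ) (hn : n ≤ (q F) ^ M) :
    PowerSeries.coeff n (eC F ^ k) = (Epoly F M ^ k).coeff n := by
  have hq : 2 ≤ q F := two_le_q F
  have hco : ∀ jx, jx ≤ (q F) ^ M →
      PowerSeries.coeff jx (eC F - (Epoly F M : PowerSeries (RatFunc F))) = 0 := by
    intro jx hj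
    rw [map_sub]
    have h1 : PowerSeries.coeff jx (eC F)
        = ∑ x ∈ Finset.range (jx + 1), if (q F) ^ x = jx then (toK F (Dpoly F x))⁻¹ else 0 := by
      simp only [eC]
      rw [PowerSeries.coeff_mk]
    have h2 : PowerSeries.coeff jx ((Epoly F M : PowerSeries (RatFunc F)))
        = ∑ x ∈ Finset.range (M + 1), if (q F) ^ x = jx then (toK F (Dpoly F x))⁻¹ else 0 := by
      rw [Polynomial.coeff_coe, coeff_Epoly]
      exact Finset.sum_congr rfl fun a _ => if_congr eq_comm rfl rfl
    rw [h1, h2, sub_eq_zero]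
    have e1 : ∑ x ∈ Finset.range (jx + 1), (if (q F) ^ x = jx then (toK F (Dpoly F x))⁻¹ else 0)
        = ∑ x ∈ Finset.range (jx + M + 2),
            (if (q F) ^ x = jx then (toK F (Dpoly F x))⁻¹ else 0) := by
      apply Finset.sum_subset
      · intro x hx; rw [Finset.mem_range] at *; omega
      · intro x hx hxn
        rw [Finset.mem_range] at hx hxn
        have hx2 := lt_q_pow F x
        rw [if_neg (by omega)]
    have e2 : ∑ x ∈ Finset.range (M + 1), (if (q F) ^ x = jx then (toK F (Dpoly F x))⁻¹ else 0)
        = ∑ x ∈ Finset.range (jx + M + 2),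
            (if (q F) ^ x = jx then (toK F (Dpoly F x))⁻¹ else 0) := by
      apply Finset.sum_subset
      · intro x hx; rw [Finset.mem_range] at *; omega
      · intro x hx hxn
        rw [Finset.mem_range] at hx hxn
        have h1x : (q F) ^ (M + 1) ≤ (q F) ^ x := Nat.pow_le_pow_right (by omega) (by omega)
        have h2x : (q F) ^ M * 2 ≤ (q F) ^ M * (q F) := Nat.mul_le_mul_left _ (by omega)
        have h3x : (q F) ^ (M + 1) = (q F) ^ M * (q F) := pow_succ _ _
        have h4x : 1 ≤ (q F) ^ M := one_le_q_pow F M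
        rw [if_neg (by omega)]
    rw [e1, e2]
  obtain ⟨g, hg⟩ := sub_dvd_pow_sub_pow (eC F) ((Epoly F M : PowerSeries (RatFunc F))) k
  have hz : PowerSeries.coeff n
      (eC F ^ k - (Epoly F M : PowerSeries (RatFunc F)) ^ k) = 0 := by
    rw [hg, PowerSeries.coeff_mul]
    apply Finset.sum_eq_zero
    intro x hx
    rw [Finset.HasAntidiagonal.mem_antidiagonal] at hx
    rw [hco x.1 (by omega), zero_mul]
  rw [map_sub, sub_eq_zero] at hz
  rw [hz, ← Polynomial.coe_pow, Polynomial.coeff_coe]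

lemma coeff_eC_pow_zero (k n : ℕ) (h : n < k) :
    PowerSeries.coeff n (eC F ^ k) = 0 := by
  induction k generalizing n with
  | zero => omega
  | succ k ih =>
    rw [pow_succ', PowerSeries.coeff_mul]
    apply Finset.sum_eq_zero
    intro x hx
    rw [Finset.HasAntidiagonal.mem_antidiagonal] at hx
    rcases Nat.eq_zero_or_pos x.1 with h0 | h1
    · have hc : PowerSeries.coeff 0 (eC F) = 0 := by
        simp [eC]
      rw [h0, hc, zero_mul]
    · rw [ih x.2 (by omega), mul_zero]

lemma coeff_eC_qpow (M v : ℕ) :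
    PowerSeries.coeff ((q F) ^ M - 1) (eC F ^ ((q F) ^ v - 1))
      = if v = M then 1 else 0 := by
  have hq : 2 ≤ q F := two_le_q F
  have h1M : 1 ≤ (q F) ^ M := one_le_q_pow F M
  by_cases hv : v ≤ M
  · rw [coeff_eC_pow_eq F M _ _ (Nat.sub_le _ _)]
    rw [coeff_Epoly_pow F M v ((q F) ^ M - 1) ?hmod]
    case hmod =>
      apply pred_mod _ _ (one_le_q_pow F v)
      rw [Nat.sub_add_cancel h1M]
      exact pow_dvd_pow _ hv
    by_cases h : v = M
    · rw [if_pos (by rw [h]), if_pos h]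
    · have hlt : (q F) ^ v < (q F) ^ M := Nat.pow_lt_pow_right (by omega) (by omega)
      have h1v : 1 ≤ (q F) ^ v := one_le_q_pow F v
      rw [if_neg (by omega), if_neg h]
  · have hlt : (q F) ^ M < (q F) ^ v := Nat.pow_lt_pow_right (by omega) (by omega)
    have h1v : 1 ≤ (q F) ^ v := one_le_q_pow F v
    rw [coeff_eC_pow_zero F _ _ (by omega), if_neg (by omega)]

lemma mem_decTuples {r N : ℕ} {i : Fin r → ℕ} :
    i ∈ decTuples r N ↔ (∀ a b : Fin r, a < b → i b < i a) ∧ ∀ l, i l < N := by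
  simp only [decTuples, Finset.mem_image, Finset.mem_filter, Finset.mem_univ, true_and]
  constructor
  · rintro ⟨i0, hi0, rfl⟩
    exact ⟨fun a b hab => hi0 a b hab, fun l => (i0 l).2⟩
  · rintro ⟨h1, h2⟩
    exact ⟨fun l => ⟨i l, h2 l⟩, fun a b hab => h1 a b hab, rfl⟩

lemma lead_pos {r : ℕ} (hr : 0 < r) (i : Fin r → ℕ) : lead i = i ⟨0, hr⟩ := dif_pos hr

lemma le_apply_zero {r : ℕ} (hr : 0 < r) (i : Fin r → ℕ)
    (h : ∀ a b : Fin r, a < b → i b < i a) (l : Fin r) : i l ≤ i ⟨0, hr⟩ := by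
  rcases Nat.eq_zero_or_pos l.1 with h0 | h1
  · have hl : l = ⟨0, hr⟩ := Fin.ext h0
    rw [hl]
  · exact le_of_lt (h ⟨0, hr⟩ l h1)

lemma zero_apply_ge {r : ℕ} (i : Fin (r + 1) → ℕ)
    (h : ∀ a b : Fin (r + 1), a < b → i b < i a) : r ≤ i ⟨0, Nat.succ_pos r⟩ := by
  have key : ∀ d, d ≤ r → d ≤ i ⟨r - d, by omega⟩ := by
    intro d
    induction d with
    | zero => intro _; exact Nat.zero_le _
    | succ d ihd =>
      intro hd
      have h1 := ihd (by omega)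
      have h2 : i ⟨r - d, by omega⟩ < i ⟨r - (d + 1), by omega⟩ := by
        apply h
        show r - (d + 1) < r - d
        omega
      omega
  have hk := key r le_rfl
  have heq : (⟨r - r, by omega⟩ : Fin (r + 1)) = ⟨0, Nat.succ_pos r⟩ := Fin.ext (by simp)
  rw [heq] at hk
  exact hk

lemma cases_apply {k : ℕ} (m0 : ℕ) (jj : Fin k → ℕ) (x : Fin (k + 1)) :
    Fin.cases (motive := fun _ => ℕ) m0 jj x
      = if h : x.1 = 0 then m0 else jj ⟨x.1 - 1, by omega⟩ := by
  induction x using Fin.cases with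
  | zero => simp
  | succ x' =>
    rw [Fin.cases_succ, dif_neg (by simp)]
    rfl

lemma MPBC_eval (R : ℕ) (hR : 0 < R) (s : Fin R → ℕ) (u : Fin R → Polynomial F) (M : ℕ) :
    MPBC F s u ((q F) ^ M - 1) =
      toK F (cfact F ((q F) ^ M - 1)) *
        ∑ i ∈ Finset.filter (fun i => lead i = M) (decTuples R ((q F) ^ M)),
          ∏ l, (toK F (u l)) ^ ((q F) ^ (i l)) * ((toK F (Lpoly F (i l))) ^ (s l))⁻¹ := by
  simp only [MPBC]
  rw [Nat.sub_add_cancel (one_le_q_pow F M)]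
  congr 1
  rw [Finset.sum_filter]
  refine Finset.sum_congr rfl fun i _ => ?_
  rw [coeff_eC_qpow F M (lead i)]
  by_cases h : lead i = M
  · rw [if_pos h, if_pos h, one_mul]
  · rw [if_neg h, if_neg h, zero_mul]

lemma filter_decTuples_one (N M : ℕ) (hM : M < N) :
    Finset.filter (fun i => lead i = M) (decTuples 1 N) = {fun _ : Fin 1 => M} := by
  ext i
  rw [Finset.mem_filter, Finset.mem_singleton, mem_decTuples]
  constructor
  · rintro ⟨⟨h1, h2⟩, h3⟩
    rw [lead_pos Nat.one_pos] at h3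
    funext l
    have hl : l = ⟨0, Nat.one_pos⟩ := Fin.ext (by omega)
    rw [hl]
    exact h3
  · rintro rfl
    refine ⟨⟨fun a b hab => ?_, fun l => hM⟩, lead_pos Nat.one_pos _⟩
    have hab' : a.1 < b.1 := hab
    have := a.2
    have := b.2
    omega

/-- Lemma `mpbceq2` of the paper. For `r ≥ 2`,
`s = (s_1, …, s_r) ∈ ℕ^r`, `j = (j_1, …, j_r) ∈ J_s` and `m ≥ r − 1`,
`BC_{q^m−1}^{s,j} = BC_{q^m−1}^{(s_1),(j_1)} ·
  Σ_{α=1}^{m−(r−2)} (1/Π(q^{m−α} − 1)) · BC_{q^{m−α}−1}^{(s_2,…,s_r),(j_2,…,j_r)}`. -/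
theorem MPBC_qpow_recursion (r : ℕ) (hr : 2 ≤ r) (s j : Fin r → ℕ) (hs : ∀ l, 0 < s l)
    (H : ℕ → Polynomial (Polynomial F)) (hH : IsATFamily F H)
    (hj : ∀ l, j l ≤ (H (s l - 1)).natDegree)
    (u : Fin r → Polynomial F) (hu : ∀ l, u l = (H (s l - 1)).coeff (j l))
    (m : ℕ) (hm : r - 1 ≤ m) :
    MPBC F s u ((q F) ^ m - 1) =
      MPBC F (fun _ : Fin 1 => s ⟨0, by omega⟩) (fun _ => u ⟨0, by omega⟩) ((q F) ^ m - 1) *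
        ∑ α ∈ Finset.Icc 1 (m - (r - 2)),
          (toK F (cfact F ((q F) ^ (m - α) - 1)))⁻¹ *
            MPBC F (fun l : Fin (r - 1) => s ⟨l.1 + 1, by have := l.2; omega⟩)
              (fun l : Fin (r - 1) => u ⟨l.1 + 1, by have := l.2; omega⟩)
              ((q F) ^ (m - α) - 1) := by
  obtain ⟨r', rfl⟩ : ∃ r', r = r' + 2 := ⟨r - 2, by omega⟩
  have hq : 2 ≤ q F := two_le_q F
  have hm' : r' + 1 ≤ m := by omega
  trans (toK F (cfact F ((q F) ^ m - 1)) *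
      ((toK F (u 0)) ^ ((q F) ^ m) * ((toK F (Lpoly F m)) ^ (s 0))⁻¹ *
        ∑ jj ∈ decTuples (r' + 1) m,
          ∏ l : Fin (r' + 1),
            (toK F (u l.succ)) ^ ((q F) ^ (jj l)) * ((toK F (Lpoly F (jj l))) ^ (s l.succ))⁻¹))
  · -- LHS equals the common form
    rw [MPBC_eval F (r' + 2) (Nat.succ_pos _) s u m]
    congr 1
    rw [Finset.mul_sum]
    refine Finset.sum_bij' (fun i _ => fun l : Fin (r' + 1) => i l.succ)
      (fun jj _ => Fin.cases m jj) ?_ ?_ ?_ ?_ ?_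
    · intro i hi
      beta_reduce
      rw [Finset.mem_filter, mem_decTuples] at hi
      obtain ⟨⟨hdec, hlt⟩, hlead⟩ := hi
      rw [lead_pos (Nat.succ_pos (r' + 1))] at hlead
      rw [mem_decTuples]
      refine ⟨fun a b hab => hdec a.succ b.succ (Fin.succ_lt_succ_iff.mpr hab), fun l => ?_⟩
      have h1 : i l.succ < i ⟨0, Nat.succ_pos (r' + 1)⟩ := by
        apply hdec
        show (0 : ℕ) < l.1 + 1
        omega
      omega
    · intro jj hjj
      beta_reduce
      rw [mem_decTuples] at hjj
      obtain ⟨hdec, hlt⟩ := hjj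
      rw [Finset.mem_filter, mem_decTuples]
      refine ⟨⟨fun a b hab => ?_, fun l => ?_⟩, ?_⟩
      · rw [cases_apply, cases_apply]
        have hab' : a.1 < b.1 := hab
        split_ifs with h1 h2 h3
        · omega
        · omega
        · exact hlt _
        · exact hdec _ _ (by show a.1 - 1 < b.1 - 1; omega)
      · rw [cases_apply]
        split_ifs with h1
        · exact lt_q_pow F m
        · exact lt_trans (hlt _) (lt_q_pow F m)
      · rw [lead_pos (Nat.succ_pos (r' + 1)), cases_apply]
        rfl
    · intro i hi
      rw [Finset.mem_filter] at hi
      have h0 : i ⟨0, Nat.succ_pos (r' + 1)⟩ = m := by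
        have h2 := hi.2
        rw [lead_pos (Nat.succ_pos (r' + 1))] at h2
        exact h2
      beta_reduce
      funext x
      obtain ⟨xv, hxv⟩ := x
      rw [cases_apply]
      split_ifs with h
      · have h' : xv = 0 := h
        rw [← h0]
        congr 1
        exact Fin.ext (by show (0 : ℕ) = xv; omega)
      · have h' : ¬ xv = 0 := h
        show i _ = i ⟨xv, hxv⟩
        congr 1
        exact Fin.ext (by show xv - 1 + 1 = xv; omega)
    · intro jj hjj
      beta_reduce
      funext l
      exact Fin.cases_succ l
    · intro i hi
      rw [Finset.mem_filter] at hi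
      have h0 : i 0 = m := by
        have h2 := hi.2
        rw [lead_pos (Nat.succ_pos (r' + 1))] at h2
        exact h2
      beta_reduce
      rw [Fin.prod_univ_succ, h0]
  · -- the common form equals the RHS
    have hstep : ∀ α ∈ Finset.Icc 1 (m - (r' + 2 - 2)),
        (toK F (cfact F ((q F) ^ (m - α) - 1)))⁻¹ *
          MPBC F (fun l : Fin (r' + 2 - 1) => s ⟨l.1 + 1, by have := l.2; omega⟩)
            (fun l : Fin (r' + 2 - 1) => u ⟨l.1 + 1, by have := l.2; omega⟩)
            ((q F) ^ (m - α) - 1)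
        = ∑ jj ∈ Finset.filter (fun jj => m - lead jj = α) (decTuples (r' + 1) m),
            ∏ l : Fin (r' + 1),
              (toK F (u l.succ)) ^ ((q F) ^ (jj l)) *
                ((toK F (Lpoly F (jj l))) ^ (s l.succ))⁻¹ := by
      intro α hα
      rw [Finset.mem_Icc] at hα
      show (toK F (cfact F ((q F) ^ (m - α) - 1)))⁻¹ *
          MPBC F (fun l : Fin (r' + 1) => s l.succ) (fun l : Fin (r' + 1) => u l.succ)
            ((q F) ^ (m - α) - 1) = _
      rw [MPBC_eval F (r' + 1) (Nat.succ_pos r') (fun l => s l.succ) (fun l => u l.succ) (m - α)]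
      rw [inv_mul_cancel_left₀ (toK_cfact_ne_zero F _)]
      congr 1
      ext jj
      rw [Finset.mem_filter, Finset.mem_filter, mem_decTuples, mem_decTuples,
        lead_pos (Nat.succ_pos r') jj]
      constructor
      · rintro ⟨⟨h1, h2⟩, h3⟩
        have hle := le_apply_zero (Nat.succ_pos r') jj h1
        refine ⟨⟨h1, fun l => ?_⟩, by omega⟩
        have := hle l
        omega
      · rintro ⟨⟨h1, h2⟩, h3⟩
        have hle := le_apply_zero (Nat.succ_pos r') jj h1
        have hlt2 : m - α < (q F) ^ (m - α) := lt_q_pow F (m - α)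
        have h20 := h2 ⟨0, Nat.succ_pos r'⟩
        refine ⟨⟨h1, fun l => ?_⟩, by omega⟩
        have := hle l
        omega
    have hmaps : ∀ jj ∈ decTuples (r' + 1) m,
        m - lead jj ∈ Finset.Icc 1 (m - (r' + 2 - 2)) := by
      intro jj hjj
      rw [mem_decTuples] at hjj
      obtain ⟨h1, h2⟩ := hjj
      rw [lead_pos (Nat.succ_pos r'), Finset.mem_Icc]
      have hge := zero_apply_ge jj h1
      have h20 := h2 ⟨0, Nat.succ_pos r'⟩
      omega
    rw [MPBC_eval F 1 Nat.one_pos]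
    rw [filter_decTuples_one ((q F) ^ m) m (lt_q_pow F m)]
    rw [Finset.sum_singleton, Fin.prod_univ_one]
    rw [Finset.sum_congr rfl hstep]
    rw [Finset.sum_fiberwise_of_maps_to (g := fun jj => m - lead jj) hmaps
      (fun jj => ∏ l : Fin (r' + 1),
        (toK F (u l.succ)) ^ ((q F) ^ (jj l)) * ((toK F (Lpoly F (jj l))) ^ (s l.succ))⁻¹)]
    exact (mul_assoc _ _ _).symm

end Carlitz
end
end
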